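/- Let g̃(t) = f_k(|p̃ γ̃(t)|) where γ̃ is a unit-speed geodesic in S²_k and p̃ ∈ S²_k, with |p̃ γ̃(t)| < π/√k for all t if k > 0. Then g̃''(t) + k·g̃(t) = 1 for all t. -/

import Mathlib

open Filter Set

/-- The model function `f_k`. -/
noncomputable def fk (k ρ : ℝ) : ℝ :=
  if 0 < k then (1 - Real.cos (Real.sqrt k * ρ)) / k
  else if k = 0 then ρ ^ 2 / 2
  else (Real.cosh (Real.sqrt (-k) * ρ) - 1) / (-k)

/-- Inverse hyperbolic cosine. -/
noncomputable def arcosh (x : ℝ) : ℝ := Real.log (x + Real.sqrt (x ^ 2 - 1))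

/-- The distance in `S²_k` from a fixed point `p̃` at distance `r` from `γ̃(0)` to the point
`γ̃(t)` of a unit-speed geodesic making angle `θ` with `[γ̃(0) p̃]`, given by the law of
cosines of the model space. -/
noncomputable def distAlong (k r θ t : ℝ) : ℝ :=
  if 0 < k then
    (1 / Real.sqrt k) * Real.arccos (Real.cos (Real.sqrt k * r) * Real.cos (Real.sqrt k * t)
      + Real.sin (Real.sqrt k * r) * Real.sin (Real.sqrt k * t) * Real.cos θ)
  else if k = 0 then Real.sqrt (r ^ 2 + t ^ 2 - 2 * r * t * Real.cos θ)
  else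
    (1 / Real.sqrt (-k)) * arcosh (Real.cosh (Real.sqrt (-k) * r) * Real.cosh (Real.sqrt (-k) * t)
      - Real.sinh (Real.sqrt (-k) * r) * Real.sinh (Real.sqrt (-k) * t) * Real.cos θ)

/- ### Auxiliary lemmas -/

lemma aux_cosh_arcosh {x : ℝ} (hx : 1 ≤ x) : Real.cosh (arcosh x) = x := by
  have h0 : (0:ℝ) ≤ x ^ 2 - 1 := by nlinarith
  have hs : Real.sqrt (x ^ 2 - 1) ^ 2 = x ^ 2 - 1 := Real.sq_sqrt h0
  have hsnn : 0 ≤ Real.sqrt (x ^ 2 - 1) := Real.sqrt_nonneg _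
  have hy : (0:ℝ) < x + Real.sqrt (x ^ 2 - 1) := by nlinarith
  have hinv : (x + Real.sqrt (x ^ 2 - 1))⁻¹ = x - Real.sqrt (x ^ 2 - 1) :=
    inv_eq_of_mul_eq_one_right (by nlinarith)
  rw [arcosh, Real.cosh_eq, Real.exp_log hy, Real.exp_neg, Real.exp_log hy, hinv]
  ring

lemma aux_trig_bound (a b c : ℝ) (hc : |c| ≤ 1) :
    |Real.cos a * Real.cos b + Real.sin a * Real.sin b * c| ≤ 1 := by
  rw [abs_le] at hc ⊢
  have h1 := Real.cos_sub a b
  have h2 := Real.cos_add a b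
  have h3 := Real.cos_le_one (a - b)
  have h4 := Real.cos_le_one (a + b)
  have h5 := Real.neg_one_le_cos (a - b)
  have h6 := Real.neg_one_le_cos (a + b)
  rcases le_total 0 (Real.sin a * Real.sin b) with hs | hs
  · constructor <;> nlinarith
  · constructor <;> nlinarith

lemma aux_cosh_bound (a b c : ℝ) (hc : |c| ≤ 1) :
    1 ≤ Real.cosh a * Real.cosh b - Real.sinh a * Real.sinh b * c := by
  rw [abs_le] at hc
  have h1 := Real.cosh_sub a b
  have h2 := Real.cosh_add a b
  have h3 := Real.one_le_cosh (a - b)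
  have h4 := Real.one_le_cosh (a + b)
  rcases le_total 0 (Real.sinh a * Real.sinh b) with hs | hs
  · nlinarith
  · nlinarith

lemma hd_cos (w x : ℝ) : HasDerivAt (fun s => Real.cos (w * s)) (-(w * Real.sin (w * x))) x := by
  have := (Real.hasDerivAt_cos (w * x)).comp x ((hasDerivAt_id x).const_mul w)
  simpa [mul_comm, Function.comp_def] using this

lemma hd_sin (w x : ℝ) : HasDerivAt (fun s => Real.sin (w * s)) (w * Real.cos (w * x)) x := by
  have := (Real.hasDerivAt_sin (w * x)).comp x ((hasDerivAt_id x).const_mul w)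
  simpa [mul_comm, Function.comp_def] using this

lemma hd_cosh (w x : ℝ) : HasDerivAt (fun s => Real.cosh (w * s)) (w * Real.sinh (w * x)) x := by
  have := (Real.hasDerivAt_cosh (w * x)).comp x ((hasDerivAt_id x).const_mul w)
  simpa [mul_comm, Function.comp_def] using this

lemma hd_sinh (w x : ℝ) : HasDerivAt (fun s => Real.sinh (w * s)) (w * Real.cosh (w * x)) x := by
  have := (Real.hasDerivAt_sinh (w * x)).comp x ((hasDerivAt_id x).const_mul w)
  simpa [mul_comm, Function.comp_def] using this

lemma deriv2_trig (c a b w t : ℝ) :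
    deriv (deriv (fun s => c + (a * Real.cos (w * s) + b * Real.sin (w * s)))) t
      = -(w ^ 2) * (a * Real.cos (w * t) + b * Real.sin (w * t)) := by
  have h1 : deriv (fun s => c + (a * Real.cos (w * s) + b * Real.sin (w * s)))
      = fun x => (-(a * w)) * Real.sin (w * x) + (b * w) * Real.cos (w * x) := by
    funext x
    have h := (((hd_cos w x).const_mul a).add ((hd_sin w x).const_mul b)).const_add c
    refine h.deriv.trans ?_; ring
  rw [h1]
  have h := ((hd_sin w t).const_mul (-(a * w))).add ((hd_cos w t).const_mul (b * w))
  refine h.deriv.trans ?_; ring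

lemma deriv2_hyp (c a b w t : ℝ) :
    deriv (deriv (fun s => c + (a * Real.cosh (w * s) + b * Real.sinh (w * s)))) t
      = w ^ 2 * (a * Real.cosh (w * t) + b * Real.sinh (w * t)) := by
  have h1 : deriv (fun s => c + (a * Real.cosh (w * s) + b * Real.sinh (w * s)))
      = fun x => (a * w) * Real.sinh (w * x) + (b * w) * Real.cosh (w * x) := by
    funext x
    have h := (((hd_cosh w x).const_mul a).add ((hd_sinh w x).const_mul b)).const_add c
    refine h.deriv.trans ?_; ring
  rw [h1]
  have h := ((hd_sinh w t).const_mul (a * w)).add ((hd_cosh w t).const_mul (b * w))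
  refine h.deriv.trans ?_; ring

lemma deriv2_poly (c d t : ℝ) :
    deriv (deriv (fun s => c + (d * s + s ^ 2 / 2))) t = 1 := by
  have h1 : deriv (fun s => c + (d * s + s ^ 2 / 2)) = fun x => d + x := by
    funext x
    have hsq : HasDerivAt (fun s : ℝ => s ^ 2 / 2) x x := by
      have := ((hasDerivAt_pow 2 x).div_const 2)
      simpa using this
    have hid : HasDerivAt (fun s : ℝ => s) 1 x := hasDerivAt_id x
    have h := ((hid.const_mul d).add hsq).const_add c
    refine h.deriv.trans ?_; ring
  rw [h1]
  have hid : HasDerivAt (fun s : ℝ => s) 1 t := hasDerivAt_id t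
  have h := hid.const_add d
  rw [h.deriv]

/-- `g̃(t) = f_k(|p̃ γ̃(t)|)` satisfies `g̃'' + k g̃ = 1` along any unit-speed geodesic of
`S²_k`. -/
theorem fk_dist_ode (k r θ : ℝ) (hr : 0 < r) (hθ : θ ∈ Set.Icc 0 Real.pi)
    (hrπ : 0 < k → ∀ t : ℝ, distAlong k r θ t < Real.pi / Real.sqrt k) :
    ∀ t : ℝ,
      deriv (deriv (fun s => fk k (distAlong k r θ s))) t
        + k * fk k (distAlong k r θ t) = 1 := by
  intro t
  rcases lt_trichotomy 0 k with hk | hk | hk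
  · -- positive curvature
    set w := Real.sqrt k with hwdef
    have hw : 0 < w := Real.sqrt_pos.2 hk
    have hw2 : w ^ 2 = k := Real.sq_sqrt hk.le
    have hkne : k ≠ 0 := ne_of_gt hk
    have key : ∀ s, fk k (distAlong k r θ s)
        = 1 / k + ((-(Real.cos (w * r) / k)) * Real.cos (w * s)
            + (-(Real.sin (w * r) * Real.cos θ / k)) * Real.sin (w * s)) := by
      intro s
      have hx := aux_trig_bound (w * r) (w * s) (Real.cos θ) (Real.abs_cos_le_one θ)
      rw [abs_le] at hx
      simp only [fk, distAlong, if_pos hk, ← hwdef]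
      rw [show w * (1 / w * Real.arccos (Real.cos (w * r) * Real.cos (w * s)
          + Real.sin (w * r) * Real.sin (w * s) * Real.cos θ)) = Real.arccos (Real.cos (w * r) * Real.cos (w * s)
          + Real.sin (w * r) * Real.sin (w * s) * Real.cos θ) by field_simp]
      rw [Real.cos_arccos hx.1 hx.2]
      field_simp; ring
    have hfun : (fun s => fk k (distAlong k r θ s))
        = fun s => 1 / k + ((-(Real.cos (w * r) / k)) * Real.cos (w * s)
            + (-(Real.sin (w * r) * Real.cos θ / k)) * Real.sin (w * s)) := funext key
    rw [hfun, key t, deriv2_trig, hw2]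
    field_simp; ring
  · -- zero curvature
    subst hk
    have key : ∀ s, fk 0 (distAlong 0 r θ s)
        = r ^ 2 / 2 + ((-(r * Real.cos θ)) * s + s ^ 2 / 2) := by
      intro s
      have hnn : (0:ℝ) ≤ r ^ 2 + s ^ 2 - 2 * r * s * Real.cos θ := by
        have h1 := Real.neg_one_le_cos θ
        have h2 := Real.cos_le_one θ
        rcases le_total 0 (r * s) with h | h <;>
          nlinarith [sq_nonneg (r - s), sq_nonneg (r + s)]
      simp only [fk, distAlong]
      norm_num
      rw [Real.sq_sqrt hnn]; ring
    have hfun : (fun s => fk 0 (distAlong 0 r θ s))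
        = fun s => r ^ 2 / 2 + ((-(r * Real.cos θ)) * s + s ^ 2 / 2) := funext key
    rw [hfun, key t, deriv2_poly]
    ring
  · -- negative curvature
    set w := Real.sqrt (-k) with hwdef
    have hw : 0 < w := Real.sqrt_pos.2 (by linarith)
    have hw2 : w ^ 2 = -k := Real.sq_sqrt (by linarith)
    have hkne : k ≠ 0 := ne_of_lt hk
    have hk' : ¬ 0 < k := not_lt.2 hk.le
    have key : ∀ s, fk k (distAlong k r θ s)
        = 1 / k + ((Real.cosh (w * r) / (-k)) * Real.cosh (w * s)
            + (-(Real.sinh (w * r) * Real.cos θ / (-k))) * Real.sinh (w * s)) := by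
      intro s
      have hx := aux_cosh_bound (w * r) (w * s) (Real.cos θ) (Real.abs_cos_le_one θ)
      simp only [fk, distAlong, if_neg hk', if_neg hkne, ← hwdef]
      rw [show w * (1 / w * arcosh (Real.cosh (w * r) * Real.cosh (w * s)
          - Real.sinh (w * r) * Real.sinh (w * s) * Real.cos θ)) = arcosh (Real.cosh (w * r) * Real.cosh (w * s)
          - Real.sinh (w * r) * Real.sinh (w * s) * Real.cos θ) by field_simp]
      rw [aux_cosh_arcosh hx]
      field_simp [hkne]; ring
    have hfun : (fun s => fk k (distAlong k r θ s))
        = fun s => 1 / k + ((Real.cosh (w * r) / (-k)) * Real.cosh (w * s)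
            + (-(Real.sinh (w * r) * Real.cos θ / (-k))) * Real.sinh (w * s)) := funext key
    rw [hfun, key t, deriv2_hyp, hw2]
    field_simp [hkne]; ring
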